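/- arXiv:0903.1743 — 2 statements merged into one kernel-verified Lean document; each statement's English description precedes it below -/
import Mathlib

section
/- For x = 1 the compensating sequence equals h_1(n) = n·(p_o(n) - p_e(n)), where h_1(n) = ∑_{i ≥ 2, b_i = n} (-1)^{s(2i-1)} b_i with b_i = ∑_{j∈S_i} j for i - 1 = ∑_{j∈S_i} 2^{j-1}, and p_e(n), p_o(n) count partitions of n into an even, resp. odd, number of distinct parts. -/
/-- Binary digit sum: number of ones in the binary expansion of `n`. -/
def binDigitSum (n : ℕ) : ℕ := (Nat.digits 2 n).sum

/-- `b_i = ∑_{j ∈ S_i} j` where `i - 1 = ∑_{j ∈ S_i} 2^{j-1}` is the binary expansion. -/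
def bNat (i : ℕ) : ℕ :=
  ∑ j ∈ Finset.Icc 1 i, if (i - 1).testBit (j - 1) then j else 0

/-- Partitions of `n` into distinct positive parts, as finite sets. -/
def distinctPartitions (n : ℕ) : Finset (Finset ℕ) :=
  (Finset.range (n + 1)).powerset.filter (fun S => 0 ∉ S ∧ S.sum id = n)

/-- Number of partitions of `n` into an even number of distinct parts. -/
def pe (n : ℕ) : ℕ := ((distinctPartitions n).filter (fun S => Even S.card)).card

/-- Number of partitions of `n` into an odd number of distinct parts. -/
def po (n : ℕ) : ℕ := ((distinctPartitions n).filter (fun S => Odd S.card)).card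

theorem mem_bitIndices_iff {m k : ℕ} : k ∈ m.bitIndices ↔ m.testBit k := by
  induction m using Nat.binaryRec generalizing k with
  | zero => simp
  | bit b m ih =>
    cases b <;> cases k <;>
      simp [Nat.bitIndices_bit_false, Nat.bitIndices_bit_true, Nat.testBit_bit_zero,
        Nat.testBit_bit_succ, ih, Nat.testBit_succ, Nat.mul_add_div,
        Nat.mul_div_cancel_left, Nat.mul_add_mod]

theorem binDigitSum_eq_length (m : ℕ) : binDigitSum m = m.bitIndices.length := by
  rw [binDigitSum]
  induction m using Nat.binaryRec with
  | zero => simp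
  | bit b m ih =>
    cases b with
    | false =>
      rcases Nat.eq_zero_or_pos m with rfl | hm
      · simp
      rw [Nat.bit_false, Nat.digits_def' (b := 2) (by norm_num) (show 0 < 2 * m by omega),
        Nat.bitIndices_two_mul]
      simp [Nat.mul_div_cancel_left, ih]
    | true =>
      rw [Nat.bit_true, Nat.digits_def' (b := 2) (by norm_num) (show 0 < 2 * m + 1 by omega),
        Nat.bitIndices_two_mul_add_one]
      simp only [List.sum_cons, List.length_cons, List.length_map, Nat.mul_add_mod,
        Nat.mul_add_div (by norm_num : 0 < 2)]
      simp [ih, Nat.add_comm]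

theorem bitIndices_card (m : ℕ) : m.bitIndices.toFinset.card = m.bitIndices.length :=
  List.toFinset_card_of_nodup Nat.bitIndices_sorted.nodup

theorem bNat_succ (m : ℕ) : bNat (m + 1) = ∑ k ∈ m.bitIndices.toFinset, (k + 1) := by
  rw [bNat]
  simp only [Nat.add_sub_cancel]
  rw [← Finset.sum_filter]
  refine Finset.sum_nbij' (fun j => j - 1) (fun k => k + 1) ?_ ?_ ?_ ?_ ?_
  · intro a ha
    simp only [Finset.mem_filter, Finset.mem_Icc] at ha
    simpa [List.mem_toFinset] using mem_bitIndices_iff.mpr ha.2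
  · intro k hk
    rw [List.mem_toFinset] at hk
    have h2 : 2 ^ k ≤ m := Nat.two_pow_le_of_mem_bitIndices hk
    have hk' : k < 2 ^ k := Nat.lt_two_pow_self (n := k)
    simp only [Finset.mem_filter, Finset.mem_Icc, Nat.add_sub_cancel]
    exact ⟨⟨by omega, by omega⟩, mem_bitIndices_iff.mp hk⟩
  · intro a ha
    simp only [Finset.mem_filter, Finset.mem_Icc] at ha
    show a - 1 + 1 = a
    omega
  · intro k _
    show k + 1 - 1 = k
    omega
  · intro a ha
    simp only [Finset.mem_filter, Finset.mem_Icc] at ha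
    show a = a - 1 + 1
    omega

theorem sum_range_two_pow (n : ℕ) : ∑ k ∈ Finset.range n, 2 ^ k = 2 ^ n - 1 := by
  induction n with
  | zero => simp
  | succ n ih =>
    rw [Finset.sum_range_succ, ih, pow_succ]
    have : 1 ≤ 2 ^ n := Nat.one_le_two_pow
    omega

theorem sum_Icc_two_pow (n : ℕ) : ∑ j ∈ Finset.Icc 1 n, 2 ^ (j - 1) = 2 ^ n - 1 := by
  rw [← sum_range_two_pow]
  induction n with
  | zero => simp
  | succ k ih =>
    rw [Finset.sum_Icc_succ_top (by omega), Finset.sum_range_succ, ih]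
    simp

/-- For `x = 1`, the compensating sequence is
`h_1(n) = ∑_{i ≥ 2, b_i = n} (-1)^{s(2i-1)} b_i = n·(p_o(n) - p_e(n))`. -/
theorem stmt_13 (n : ℕ) (hn : 1 ≤ n) :
    (∑ i ∈ Finset.Icc 2 (2 ^ n),
      if bNat i = n then (-1 : ℤ) ^ binDigitSum (2 * i - 1) * (bNat i : ℤ) else 0)
      = (n : ℤ) * ((po n : ℤ) - (pe n : ℤ)) := by
  rw [← Finset.sum_filter]
  have key : ∑ i ∈ (Finset.Icc 2 (2 ^ n)).filter (fun i => bNat i = n),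
      ((-1 : ℤ) ^ binDigitSum (2 * i - 1) * (bNat i : ℤ))
      = ∑ S ∈ distinctPartitions n, ((-1 : ℤ) ^ (S.card + 1) * (n : ℤ)) := by
    refine Finset.sum_nbij' (fun i => ((i - 1).bitIndices.toFinset).image (· + 1))
      (fun S => (∑ j ∈ S, 2 ^ (j - 1)) + 1) ?_ ?_ ?_ ?_ ?_
    · -- forward membership
      intro i hi
      simp only [Finset.mem_filter, Finset.mem_Icc] at hi
      obtain ⟨⟨h2i, hile⟩, hb⟩ := hi
      have hi1 : i - 1 + 1 = i := by omega
      have hsum : ∑ j ∈ ((i - 1).bitIndices.toFinset).image (· + 1), j = n := by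
        rw [Finset.sum_image (by intro a _ b _ h; simp only at h; omega), ← bNat_succ, hi1, hb]
      simp only [distinctPartitions, Finset.mem_filter, Finset.mem_powerset]
      refine ⟨?_, by simp, by simpa [id] using hsum⟩
      intro j hj
      have hjle : j ≤ n := by
        have h := Finset.single_le_sum (f := fun j => j)
          (fun a _ => Nat.zero_le a) hj
        omega
      simp [Finset.mem_range]; omega
    · -- backward membership
      intro S hS
      simp only [distinctPartitions, Finset.mem_filter, Finset.mem_powerset] at hS
      obtain ⟨hsub, h0, hsum⟩ := hS
      have hpos : ∀ j ∈ S, 1 ≤ j := by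
        intro j hj
        rcases Nat.eq_zero_or_pos j with rfl | h
        · exact absurd hj h0
        · exact h
      have hsum' : ∑ j ∈ S, j = n := by simpa using hsum
      have hle : ∀ j ∈ S, j ≤ n := by
        intro j hj
        have h := Finset.single_le_sum (f := fun j => j) (fun a _ => Nat.zero_le a) hj
        omega
      set m := ∑ j ∈ S, 2 ^ (j - 1) with hm
      have hSne : S.Nonempty := by
        rcases Finset.eq_empty_or_nonempty S with rfl | h
        · simp at hsum; omega
        · exact h
      have hm1 : 1 ≤ m := by
        obtain ⟨j, hj⟩ := hSne
        calc 1 ≤ 2 ^ (j - 1) := Nat.one_le_two_pow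
        _ ≤ m := Finset.single_le_sum (f := fun j => 2 ^ (j - 1))
            (fun a _ => Nat.zero_le _) hj
      have hmle : m ≤ 2 ^ n - 1 := by
        have hsub' : S ⊆ Finset.Icc 1 n := by
          intro j hj; simp only [Finset.mem_Icc]; exact ⟨hpos j hj, hle j hj⟩
        have h1 : m ≤ ∑ j ∈ Finset.Icc 1 n, 2 ^ (j - 1) :=
          Finset.sum_le_sum_of_subset hsub'
        have h2 := sum_Icc_two_pow n
        omega
      -- the bit set of m is S shifted down by 1
      have hbits : m.bitIndices.toFinset = S.image (· - 1) := by
        have : m = ∑ k ∈ S.image (· - 1), 2 ^ k := by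
          rw [Finset.sum_image]
          intro a ha b hb h
          have := hpos a ha; have := hpos b hb; simp only at h; omega
        rw [this, Finset.toFinset_bitIndices_twoPowSum]
      have hbn : bNat (m + 1) = n := by
        rw [bNat_succ, hbits, Finset.sum_image (by
          intro a ha b hb h
          have := hpos a ha; have := hpos b hb; simp only at h; omega)]
        rw [← hsum']
        refine Finset.sum_congr rfl fun j hj => ?_
        have := hpos j hj
        omega
      simp only [Finset.mem_filter, Finset.mem_Icc]
      have h2 : 1 ≤ 2 ^ n := Nat.one_le_two_pow
      exact ⟨⟨by omega, by omega⟩, hbn⟩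
    · -- left inverse
      intro i hi
      simp only [Finset.mem_filter, Finset.mem_Icc] at hi
      rw [Finset.sum_image (by intro a _ b _ h; simp only at h; omega)]
      simp only [Nat.add_sub_cancel]
      rw [Finset.twoPowSum_toFinset_bitIndices]
      omega
    · -- right inverse
      intro S hS
      simp only [distinctPartitions, Finset.mem_filter, Finset.mem_powerset] at hS
      obtain ⟨hsub, h0, hsum⟩ := hS
      have hpos : ∀ j ∈ S, 1 ≤ j := by
        intro j hj
        rcases Nat.eq_zero_or_pos j with rfl | h
        · exact absurd hj h0
        · exact h
      simp only [Nat.add_sub_cancel]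
      have hbits : (∑ j ∈ S, 2 ^ (j - 1)).bitIndices.toFinset = S.image (· - 1) := by
        have : (∑ j ∈ S, 2 ^ (j - 1)) = ∑ k ∈ S.image (· - 1), 2 ^ k := by
          rw [Finset.sum_image]
          intro a ha b hb h
          have := hpos a ha; have := hpos b hb; simp only at h; omega
        rw [this, Finset.toFinset_bitIndices_twoPowSum]
      rw [hbits, Finset.image_image]
      conv_rhs => rw [← Finset.image_id (s := S)]
      refine Finset.image_congr fun j hj => ?_
      have := hpos j hj
      show j - 1 + 1 = j
      omega
    · -- values agree
      intro i hi
      simp only [Finset.mem_filter, Finset.mem_Icc] at hi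
      obtain ⟨⟨h2i, _⟩, hb⟩ := hi
      have him : 2 * i - 1 = 2 * (i - 1) + 1 := by omega
      have hcard : (((i - 1).bitIndices.toFinset).image (· + 1)).card
          = (i - 1).bitIndices.length := by
        rw [Finset.card_image_of_injective _ (add_left_injective 1), bitIndices_card]
      have hdig : binDigitSum (2 * i - 1) = (i - 1).bitIndices.length + 1 := by
        rw [him, binDigitSum_eq_length, Nat.bitIndices_two_mul_add_one]
        simp
      rw [hb, hdig, hcard, Nat.add_comm]
  rw [key]
  -- now split by parity
  rw [← Finset.sum_filter_add_sum_filter_not (distinctPartitions n) (fun S => Odd S.card)]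
  have h1 : ∑ S ∈ (distinctPartitions n).filter (fun S => Odd S.card),
      ((-1 : ℤ) ^ (S.card + 1) * (n : ℤ)) = (po n : ℤ) * n := by
    have hval : ∀ S ∈ (distinctPartitions n).filter (fun S => Odd S.card),
        ((-1 : ℤ) ^ (S.card + 1) * (n : ℤ)) = (n : ℤ) := by
      intro S hS
      simp only [Finset.mem_filter] at hS
      rw [Even.neg_one_pow (Odd.add_one hS.2), one_mul]
    rw [Finset.sum_congr rfl hval, Finset.sum_const, po, nsmul_eq_mul]
  have h2 : ∑ S ∈ (distinctPartitions n).filter (fun S => ¬ Odd S.card),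
      ((-1 : ℤ) ^ (S.card + 1) * (n : ℤ)) = -((pe n : ℤ) * n) := by
    have hfe : (distinctPartitions n).filter (fun S => ¬ Odd S.card)
        = (distinctPartitions n).filter (fun S => Even S.card) := by
      refine Finset.filter_congr fun S _ => by simp [Nat.not_odd_iff_even]
    have hval : ∀ S ∈ (distinctPartitions n).filter (fun S => Even S.card),
        ((-1 : ℤ) ^ (S.card + 1) * (n : ℤ)) = -(n : ℤ) := by
      intro S hS
      simp only [Finset.mem_filter] at hS
      rw [Odd.neg_one_pow (Even.add_one hS.2), neg_one_mul]
    rw [hfe, Finset.sum_congr rfl hval, Finset.sum_const, pe, nsmul_eq_mul]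
    ring
  rw [h1, h2]; ring
end

section
/- Let A = {2^{j-1} : j ≥ 1} and σ_0^{(A)}(n) = #{ j ≥ 1 : 2^{j-1} | n } (the number of powers of 2 dividing n, i.e., 1 plus the 2-adic valuation of n). Then for every n ≥ 1: ∑_{j=1}^{n} (-1)^{s(n-j)} σ_0^{(A)}(j) = (-1)^{s(n)-1} s(n), where s is the binary digit sum. -/
/-- `σ_0^{(A)}(n)`, for `A = {2^{j-1} : j ≥ 1}`: the number of powers of `2` dividing `n`,
i.e. `v_2(n) + 1`. -/
def sigma0Pow2 (n : ℕ) : ℕ := padicValNat 2 n + 1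

lemma s_rec (n : ℕ) : binDigitSum n = n % 2 + binDigitSum (n / 2) := by
  rcases Nat.eq_zero_or_pos n with h | h
  · subst h; simp [binDigitSum]
  · unfold binDigitSum
    rw [Nat.digits_def' (by norm_num : 1 < 2) h]
    simp

lemma s_two_mul (m : ℕ) : binDigitSum (2 * m) = binDigitSum m := by
  rw [s_rec]; simp [Nat.mul_div_cancel_left]

lemma s_two_mul_add_one (m : ℕ) : binDigitSum (2 * m + 1) = binDigitSum m + 1 := by
  rw [s_rec]
  have h1 : (2 * m + 1) / 2 = m := by omega
  have h2 : (2 * m + 1) % 2 = 1 := by omega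
  rw [h1, h2]; ring

lemma s_split (i a r : ℕ) (hr : r < 2 ^ i) :
    binDigitSum (2 ^ i * a + r) = binDigitSum a + binDigitSum r := by
  induction i generalizing r with
  | zero =>
    interval_cases r
    simp [binDigitSum]
  | succ i ih =>
    have hp : (2:ℕ) ^ (i+1) = 2 * 2 ^ i := by ring
    have hr2 : r / 2 < 2 ^ i := by omega
    have key : 2 ^ (i+1) * a + r = 2 * (2 ^ i * a + r / 2) + r % 2 := by
      have := Nat.div_add_mod r 2
      rw [hp]; ring_nf; omega
    rw [key]
    rcases Nat.mod_two_eq_zero_or_one r with h | h <;> rw [h]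
    · rw [add_zero, s_two_mul, ih _ hr2, s_rec r, h]
      ring
    · rw [s_two_mul_add_one, ih _ hr2, s_rec r, h]
      ring

lemma S_even (u : ℕ) : ∑ m ∈ Finset.range (2 * u), (-1 : ℤ) ^ binDigitSum m = 0 := by
  induction u with
  | zero => simp
  | succ u ih =>
    have h1 : 2 * (u + 1) = (2 * u) + 1 + 1 := by ring
    rw [h1, Finset.sum_range_succ, Finset.sum_range_succ, ih, s_two_mul_add_one, s_two_mul,
      pow_succ]
    ring

lemma S_odd (u : ℕ) :
    ∑ m ∈ Finset.range (2 * u + 1), (-1 : ℤ) ^ binDigitSum m = (-1) ^ binDigitSum u := by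
  rw [Finset.sum_range_succ, S_even, s_two_mul, zero_add]

lemma bitsum (K : ℕ) : ∀ n : ℕ, n < 2 ^ K →
    (∑ i ∈ Finset.range K, (n / 2 ^ i) % 2) = binDigitSum n := by
  induction K with
  | zero => intro n hn; interval_cases n; simp [binDigitSum]
  | succ K ih =>
    intro n hn
    rw [Finset.sum_range_succ']
    have h1 : ∀ i, n / 2 ^ (i + 1) = (n / 2) / 2 ^ i := by
      intro i
      rw [pow_succ', Nat.div_div_eq_div_mul]
    simp only [h1]
    have h2 : n / 2 < 2 ^ K := by
      have : (2:ℕ) ^ (K+1) = 2 * 2 ^ K := by ring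
      omega
    rw [ih _ h2]
    simp only [pow_zero, Nat.div_one]
    rw [s_rec n]
    ring

lemma s_pos : ∀ n : ℕ, 1 ≤ n → 1 ≤ binDigitSum n := by
  intro n
  induction n using Nat.strong_induction_on with
  | _ n ih =>
    intro hn
    rw [s_rec]
    rcases Nat.mod_two_eq_zero_or_one n with h | h
    · have := ih (n / 2) (by omega) (by omega)
      omega
    · omega

lemma sigma_eq (n j : ℕ) (h1 : 1 ≤ j) (h2 : j ≤ n) :
    (sigma0Pow2 j : ℤ) = ∑ i ∈ Finset.range n, (if 2 ^ i ∣ j then 1 else 0) := by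
  set v := padicValNat 2 j with hv
  have hdvd : (2:ℕ) ^ v ∣ j := pow_padicValNat_dvd
  have hle : 2 ^ v ≤ j := Nat.le_of_dvd h1 hdvd
  have hvn : v + 1 ≤ n := le_trans (Nat.lt_two_pow_self (n := v)) (le_trans hle h2)
  have hiff : ∀ i, 2 ^ i ∣ j ↔ i ≤ v := by
    intro i
    rw [padicValNat_dvd_iff]
    constructor
    · rintro (h | h)
      · omega
      · exact h
    · exact fun h => Or.inr h
  have : ∑ i ∈ Finset.range n, (if 2 ^ i ∣ j then (1:ℤ) else 0)
      = ∑ i ∈ Finset.range n, (if i ≤ v then (1:ℤ) else 0) := by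
    refine Finset.sum_congr rfl fun i _ => ?_
    simp [hiff i]
  have hfil : (Finset.range n).filter (fun i => i ≤ v) = Finset.range (v + 1) := by
    ext i
    simp only [Finset.mem_filter, Finset.mem_range]
    omega
  rw [this, ← Finset.sum_filter, hfil]
  simp [sigma0Pow2, hv]



lemma innerBitSum16 (n : ℕ) (hn : 1 ≤ n) (i : ℕ) :
    ∑ j ∈ Finset.Icc 1 n, (-1:ℤ) ^ binDigitSum (n - j) * (if 2 ^ i ∣ j then 1 else 0)
      = ((n / 2 ^ i % 2 : ℕ) : ℤ) * (-1) ^ (binDigitSum n - 1) := by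
  have hp : 0 < 2 ^ i := Nat.pow_pos (by norm_num)
  set q := n / 2 ^ i with hq
  set r := n % 2 ^ i with hr
  have hnqr : n = 2 ^ i * q + r := (Nat.div_add_mod n (2 ^ i)).symm
  have hrlt : r < 2 ^ i := Nat.mod_lt n hp
  simp only [mul_ite, mul_one, mul_zero]
  rw [← Finset.sum_filter]
  have hfil : (Finset.Icc 1 n).filter (fun j => 2 ^ i ∣ j)
      = (Finset.Icc 1 q).image (fun k => 2 ^ i * k) := by
    ext j
    simp only [Finset.mem_filter, Finset.mem_Icc, Finset.mem_image]
    constructor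
    · rintro ⟨⟨hj1, hjn⟩, hd⟩
      refine ⟨j / 2 ^ i, ⟨?_, ?_⟩, Nat.mul_div_cancel' hd⟩
      · have := Nat.le_of_dvd hj1 hd
        exact (Nat.one_le_div_iff hp).mpr this
      · exact Nat.div_le_div_right hjn
    · rintro ⟨k, ⟨hk1, hkq⟩, rfl⟩
      refine ⟨⟨?_, ?_⟩, Dvd.intro k rfl⟩
      · calc 1 ≤ 2 ^ i := hp
          _ = 2 ^ i * 1 := by ring
          _ ≤ 2 ^ i * k := Nat.mul_le_mul_left _ hk1
      · calc 2 ^ i * k ≤ 2 ^ i * q := Nat.mul_le_mul_left _ hkq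
          _ ≤ 2 ^ i * q + r := Nat.le_add_right _ _
          _ = n := hnqr.symm
  rw [hfil, Finset.sum_image (fun a _ b _ h => by
    exact Nat.eq_of_mul_eq_mul_left hp h)]
  have hterm : ∀ k ∈ Finset.Icc 1 q,
      (-1:ℤ) ^ binDigitSum (n - 2 ^ i * k) = (-1) ^ binDigitSum r * (-1) ^ binDigitSum (q - k) := by
    intro k hk
    simp only [Finset.mem_Icc] at hk
    have hkq : k ≤ q := hk.2
    have hsub : n - 2 ^ i * k = 2 ^ i * (q - k) + r := by
      have h1 : q - k + k = q := Nat.sub_add_cancel hkq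
      have h2 : 2 ^ i * (q - k) + 2 ^ i * k = 2 ^ i * q := by rw [← Nat.mul_add, h1]
      omega
    rw [hsub, s_split i (q - k) r hrlt, pow_add]
    ring
  rw [Finset.sum_congr rfl hterm, ← Finset.mul_sum]
  have hreindex : ∑ k ∈ Finset.Icc 1 q, (-1:ℤ) ^ binDigitSum (q - k)
      = ∑ m ∈ Finset.range q, (-1:ℤ) ^ binDigitSum m := by
    refine Finset.sum_nbij' (i := fun k => q - k) (j := fun m => q - m) ?_ ?_ ?_ ?_ ?_
    · intro k hk; simp only [Finset.mem_Icc] at hk; simp only [Finset.mem_range]; omega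
    · intro m hm; simp only [Finset.mem_range] at hm; simp only [Finset.mem_Icc]; omega
    · intro k hk; simp only [Finset.mem_Icc] at hk; show q - (q - k) = k; omega
    · intro m hm; simp only [Finset.mem_range] at hm; show q - (q - m) = m; omega
    · intro k hk; rfl
  rw [hreindex]
  rcases Nat.mod_two_eq_zero_or_one q with hq2 | hq2
  · have hS : ∑ m ∈ Finset.range q, (-1:ℤ) ^ binDigitSum m = 0 := by
      rw [show q = 2 * (q / 2) from by omega]
      exact S_even _
    rw [hS, hq2]
    simp
  · obtain ⟨u, hu⟩ : ∃ u, q = 2 * u + 1 := ⟨q / 2, by omega⟩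
    have hS : ∑ m ∈ Finset.range q, (-1:ℤ) ^ binDigitSum m = (-1) ^ binDigitSum u := by
      rw [hu]; exact S_odd u
    have hsn : binDigitSum n = binDigitSum r + binDigitSum u + 1 := by
      rw [hnqr, s_split i q r hrlt, hu, s_two_mul_add_one]
      ring
    rw [hS, hq2, show binDigitSum n - 1 = binDigitSum r + binDigitSum u from by omega, pow_add]
    push_cast
    ring

/-- `∑_{j=1}^{n} (-1)^{s(n-j)} σ_0^{(A)}(j) = (-1)^{s(n)-1} s(n)` for all `n ≥ 1`. -/
theorem stmt_16 (n : ℕ) (hn : 1 ≤ n) :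
    ∑ j ∈ Finset.Icc 1 n, (-1 : ℤ) ^ binDigitSum (n - j) * (sigma0Pow2 j : ℤ)
      = (-1 : ℤ) ^ (binDigitSum n - 1) * (binDigitSum n : ℤ) := by
  have step1 : ∑ j ∈ Finset.Icc 1 n, (-1 : ℤ) ^ binDigitSum (n - j) * (sigma0Pow2 j : ℤ)
      = ∑ j ∈ Finset.Icc 1 n, ∑ i ∈ Finset.range n,
          (-1 : ℤ) ^ binDigitSum (n - j) * (if 2 ^ i ∣ j then 1 else 0) := by
    refine Finset.sum_congr rfl fun j hj => ?_
    simp only [Finset.mem_Icc] at hj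
    rw [sigma_eq n j hj.1 hj.2, Finset.mul_sum]
  rw [step1, Finset.sum_comm]
  have step2 : ∀ i ∈ Finset.range n,
      ∑ j ∈ Finset.Icc 1 n, (-1 : ℤ) ^ binDigitSum (n - j) * (if 2 ^ i ∣ j then 1 else 0)
        = ((n / 2 ^ i % 2 : ℕ) : ℤ) * (-1) ^ (binDigitSum n - 1) :=
    fun i _ => innerBitSum16 n hn i
  rw [Finset.sum_congr rfl step2, ← Finset.sum_mul, ← Nat.cast_sum,
    bitsum n n (Nat.lt_two_pow_self (n := n))]
  ring
end
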